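/- (A,S) is a symplectic spectral pair in Z_n × Z_n if and only if (S,A) is a symplectic spectral pair in Z_n × Z_n. -/

import Mathlib

open Complex
open scoped Classical
open Matrix

/-- The character value `e^{2πi t/n}` for `t : ZMod n`. -/
noncomputable def charVal (n : ℕ) (t : ZMod n) : ℂ :=
  Complex.exp (2 * Real.pi * Complex.I * (t.val : ℂ) / (n : ℂ))

/-- The symplectic form `⟨x,y⟩ = x₁y₂ - x₂y₁` on `ZMod n × ZMod n`. -/
def sympForm {n : ℕ} (x y : ZMod n × ZMod n) : ZMod n :=
  x.1 * y.2 - x.2 * y.1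

/-- Symplectic Fourier transform of the indicator of `A`. -/
noncomputable def symFT {n : ℕ} (A : Set (ZMod n × ZMod n)) (ξ : ZMod n × ZMod n) : ℂ :=
  ∑ᶠ a ∈ A, charVal n (sympForm a ξ)

/-- Euclidean Fourier transform of the indicator of `A`. -/
noncomputable def euclFT {n : ℕ} (A : Set (ZMod n × ZMod n)) (ξ : ZMod n × ZMod n) : ℂ :=
  ∑ᶠ a ∈ A, charVal n (a.1 * ξ.1 + a.2 * ξ.2)

/-- Difference set `ΔA = {a - a' : a,a' ∈ A, a ≠ a'}`. -/
def diffSet {G : Type*} [AddGroup G] (A : Set G) : Set G :=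
  {d | ∃ a ∈ A, ∃ a' ∈ A, a ≠ a' ∧ d = a - a'}

/-- `A ⊕ B = G`: every element of `G` is uniquely a sum `a + b` with `a ∈ A`, `b ∈ B`. -/
def IsTilingPair {G : Type*} [AddCommGroup G] (A B : Set G) : Prop :=
  ∀ g : G, ∃! p : G × G, p.1 ∈ A ∧ p.2 ∈ B ∧ p.1 + p.2 = g

/-- Symplectic orthogonal set `H^{⊥s}`. -/
def sympPerp {n : ℕ} (H : Set (ZMod n × ZMod n)) : Set (ZMod n × ZMod n) :=
  {g | ∀ h ∈ H, sympForm g h = 0}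

/-- `(A,S)` is a symplectic spectral pair: `|A| = |S|` and `ΔS ⊆ Z(1̂_A^{sym})`. -/
def IsSympSpectralPair {n : ℕ} (A S : Set (ZMod n × ZMod n)) : Prop :=
  Nat.card A = Nat.card S ∧ ∀ s ∈ S, ∀ s' ∈ S, s ≠ s' → symFT A (s - s') = 0

section Aux
variable {n : ℕ}

lemma charVal_eq_pow (t : ZMod n) :
    charVal n t = Complex.exp (2 * Real.pi * Complex.I / n) ^ t.val := by
  rw [← Complex.exp_nat_mul, charVal]
  congr 1
  field_simp

lemma root_pow_n (hn : 0 < n) :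
    Complex.exp (2 * Real.pi * Complex.I / n) ^ n = 1 := by
  rw [← Complex.exp_nat_mul]
  have hne : (n : ℂ) ≠ 0 := Nat.cast_ne_zero.mpr hn.ne'
  rw [show (n : ℂ) * (2 * Real.pi * Complex.I / n) = 2 * Real.pi * Complex.I by
    field_simp]
  simpa [mul_comm, mul_assoc] using Complex.exp_two_pi_mul_I

lemma root_pow_mod (hn : 0 < n) (a : ℕ) :
    Complex.exp (2 * Real.pi * Complex.I / n) ^ (a % n) =
      Complex.exp (2 * Real.pi * Complex.I / n) ^ a := by
  conv_rhs => rw [← Nat.div_add_mod a n]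
  rw [pow_add, pow_mul, root_pow_n hn, one_pow, one_mul]

lemma charVal_add (hn : 0 < n) (t t' : ZMod n) :
    charVal n (t + t') = charVal n t * charVal n t' := by
  haveI : NeZero n := ⟨hn.ne'⟩
  rw [charVal_eq_pow, charVal_eq_pow, charVal_eq_pow, ← pow_add,
    ZMod.val_add, root_pow_mod hn]

lemma charVal_zero (hn : 0 < n) : charVal n 0 = 1 := by
  haveI : NeZero n := ⟨hn.ne'⟩
  simp [charVal, ZMod.val_zero]

lemma conj_charVal (hn : 0 < n) (t : ZMod n) :
    (starRingEnd ℂ) (charVal n t) = charVal n (-t) := by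
  have h1 : charVal n t * charVal n (-t) = 1 := by
    rw [← charVal_add hn, add_neg_cancel, charVal_zero hn]
  have h2 : charVal n t * (starRingEnd ℂ) (charVal n t) = 1 := by
    rw [mul_conj]
    norm_cast
    rw [charVal]
    rw [show 2 * Real.pi * Complex.I * (t.val : ℂ) / n
      = ((2 * Real.pi * t.val / n : ℝ) : ℂ) * Complex.I by push_cast; ring]
    simp [Complex.normSq_eq_norm_sq, Complex.norm_exp]
  have hne : charVal n t ≠ 0 := by
    intro h; rw [h, zero_mul] at h2; exact one_ne_zero h2.symm
  rw [← h1] at h2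
  exact mul_left_cancel₀ hne h2

lemma charVal_sub (hn : 0 < n) (t t' : ZMod n) :
    charVal n (t - t') = charVal n t * (starRingEnd ℂ) (charVal n t') := by
  rw [conj_charVal hn, ← charVal_add hn, sub_eq_add_neg]

lemma charVal_mul_conj_self (hn : 0 < n) (t : ZMod n) :
    charVal n t * (starRingEnd ℂ) (charVal n t) = 1 := by
  rw [← charVal_sub hn, sub_self, charVal_zero hn]

lemma symFT_eq_sum (hn : 0 < n) (A : Set (ZMod n × ZMod n)) (ξ : ZMod n × ZMod n) :
    haveI : NeZero n := ⟨hn.ne'⟩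
    symFT A ξ = ∑ a : ↥A, charVal n (sympForm a ξ) := by
  haveI : NeZero n := ⟨hn.ne'⟩
  rw [symFT, ← finsum_set_coe_eq_finsum_mem, finsum_eq_sum_of_fintype]

lemma sympForm_sub_right {n : ℕ} (b s s' : ZMod n × ZMod n) :
    sympForm b (s - s') = sympForm b s - sympForm b s' := by
  simp only [sympForm, Prod.fst_sub, Prod.snd_sub]
  ring

lemma sympForm_sub_swap {n : ℕ} (s a a' : ZMod n × ZMod n) :
    sympForm s (a - a') = sympForm a' s - sympForm a s := by
  simp only [sympForm, Prod.fst_sub, Prod.snd_sub]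
  ring

lemma spp_symm {n : ℕ} (hn : 0 < n) (A S : Set (ZMod n × ZMod n))
    (h : IsSympSpectralPair A S) : IsSympSpectralPair S A := by
  haveI : NeZero n := ⟨hn.ne'⟩
  obtain ⟨hc, horth⟩ := h
  refine ⟨hc.symm, ?_⟩
  intro a ha a' ha' hne
  set c : ℂ := (Nat.card ↥A : ℂ) with hcdef
  have hApos : 0 < Nat.card ↥A := Nat.card_pos_iff.mpr ⟨⟨a, ha⟩, Set.toFinite A⟩
  have hc0 : c ≠ 0 := Nat.cast_ne_zero.mpr hApos.ne'
  set M : Matrix ↥S ↥A ℂ := fun s b => charVal n (sympForm b s) with hM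
  have hMMH : M * Mᴴ = c • (1 : Matrix ↥S ↥S ℂ) := by
    ext s s'
    rw [Matrix.mul_apply, Matrix.smul_apply]
    by_cases hss : s = s'
    · subst hss
      rw [Matrix.one_apply_eq]
      have hone : ∀ b : ↥A, M s b * Mᴴ b s = 1 := by
        intro b
        rw [hM]
        simp only [Matrix.conjTranspose_apply, Complex.star_def]
        exact charVal_mul_conj_self hn _
      rw [Finset.sum_congr rfl (fun b _ => hone b), Finset.sum_const, Finset.card_univ,
        nsmul_eq_mul, mul_one, hcdef, Nat.card_eq_fintype_card, smul_eq_mul, mul_one]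
    · rw [Matrix.one_apply_ne hss, smul_zero]
      have key : ∀ b : ↥A, M s b * Mᴴ b s' = charVal n (sympForm b (s.1 - s'.1)) := by
        intro b
        rw [hM]
        simp only [Matrix.conjTranspose_apply, Complex.star_def]
        rw [sympForm_sub_right, charVal_sub hn]
        rfl
      simp only [key]
      have := horth s s.2 s' s'.2 (fun hh => hss (Subtype.ext hh))
      rw [symFT_eq_sum hn] at this
      exact this
  have hcard : Fintype.card ↥S = Fintype.card ↥A := by
    rw [← Nat.card_eq_fintype_card, ← Nat.card_eq_fintype_card, hc]
  have e : ↥S ≃ ↥A := Fintype.equivOfCardEq hcard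
  have h1 : M * (c⁻¹ • Mᴴ) = 1 := by
    rw [Matrix.mul_smul, hMMH, smul_smul, inv_mul_cancel₀ hc0, one_smul]
  have h2 : (c⁻¹ • Mᴴ) * M = 1 := (Matrix.mul_eq_one_comm_of_equiv e).mp h1
  have hMHM : Mᴴ * M = c • (1 : Matrix ↥A ↥A ℂ) := by
    have h3 : Mᴴ * M = c • ((c⁻¹ • Mᴴ) * M) := by
      rw [Matrix.smul_mul, smul_smul, mul_inv_cancel₀ hc0, one_smul]
    rw [h3, h2]
  have hne' : (⟨a, ha⟩ : ↥A) ≠ ⟨a', ha'⟩ := fun hh => hne (congrArg Subtype.val hh)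
  have hentry := congrFun (congrFun hMHM ⟨a, ha⟩) ⟨a', ha'⟩
  rw [Matrix.mul_apply, Matrix.smul_apply, Matrix.one_apply_ne hne', smul_zero] at hentry
  rw [symFT_eq_sum hn]
  rw [← hentry]
  apply Finset.sum_congr rfl
  intro s _
  rw [hM]
  simp only [Matrix.conjTranspose_apply, Complex.star_def]
  rw [sympForm_sub_swap, charVal_sub hn]
  ring
  rfl

theorem sympSpectralPair_comm (n : ℕ) (hn : 0 < n) (A S : Set (ZMod n × ZMod n)) :
    IsSympSpectralPair A S ↔ IsSympSpectralPair S A :=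
  ⟨spp_symm hn A S, spp_symm hn S A⟩
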